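/- There exist eight unit vectors φ_1, …, φ_8 in ℝ³ such that max_{1 ≤ i < j ≤ 8} |⟨φ_i, φ_j⟩| < 0.64759. -/

import Mathlib

noncomputable section

open scoped RealInnerProductSpace

/-- Build a vector in `ℝ³` from three coordinates. -/
def pv (a b c : ℝ) : EuclideanSpace ℝ (Fin 3) :=
  (WithLp.equiv 2 (Fin 3 → ℝ)).symm ![a, b, c]

lemma inner_pv (a b c d e f : ℝ) :
    (inner ℝ (pv a b c) (pv d e f) : ℝ) = a * d + b * e + c * f := by
  simp [pv, PiLp.inner_apply, Fin.sum_univ_three, RCLike.inner_apply, WithLp.equiv_symm_apply, PiLp.toLp_apply]; ring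

lemma norm_normalize (u : EuclideanSpace ℝ (Fin 3)) (hu : (0:ℝ) < inner ℝ u u) :
    ‖‖u‖⁻¹ • u‖ = 1 := by
  have h : ‖u‖ ≠ 0 := by
    intro h
    rw [real_inner_self_eq_norm_sq, h] at hu
    norm_num at hu
  rw [norm_smul, norm_inv, norm_norm, inv_mul_cancel₀ h]

lemma abs_inner_normalize_lt (c : ℝ) (hc : 0 ≤ c) (u w : EuclideanSpace ℝ (Fin 3))
    (hu : (0:ℝ) < inner ℝ u u) (hw : (0:ℝ) < inner ℝ w w)
    (h : (inner ℝ u w : ℝ) ^ 2 < c ^ 2 * ((inner ℝ u u : ℝ) * (inner ℝ w w : ℝ))) :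
    |(inner ℝ (‖u‖⁻¹ • u) (‖w‖⁻¹ • w) : ℝ)| < c := by
  have hnu : (0:ℝ) < ‖u‖ := by
    rcases (norm_nonneg u).lt_or_eq with h' | h'
    · exact h'
    · exfalso; rw [real_inner_self_eq_norm_sq, ← h'] at hu; norm_num at hu
  have hnw : (0:ℝ) < ‖w‖ := by
    rcases (norm_nonneg w).lt_or_eq with h' | h'
    · exact h'
    · exfalso; rw [real_inner_self_eq_norm_sq, ← h'] at hw; norm_num at hw
  have key : |(inner ℝ u w : ℝ)| < c * (‖u‖ * ‖w‖) := by
    refine lt_of_pow_lt_pow_left₀ 2 (by positivity) ?_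
    rw [sq_abs]
    calc (inner ℝ u w : ℝ) ^ 2 < c ^ 2 * ((inner ℝ u u : ℝ) * (inner ℝ w w : ℝ)) := h
    _ = (c * (‖u‖ * ‖w‖)) ^ 2 := by
        rw [real_inner_self_eq_norm_sq, real_inner_self_eq_norm_sq]; ring
  rw [real_inner_smul_left, real_inner_smul_right, abs_mul, abs_mul, abs_inv, abs_inv,
    abs_norm, abs_norm]
  calc ‖u‖⁻¹ * (‖w‖⁻¹ * |(inner ℝ u w : ℝ)|)
      < ‖u‖⁻¹ * (‖w‖⁻¹ * (c * (‖u‖ * ‖w‖))) := by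
        apply mul_lt_mul_of_pos_left _ (by positivity)
        exact mul_lt_mul_of_pos_left key (by positivity)
    _ = c := by field_simp

def w0 : EuclideanSpace ℝ (Fin 3) := pv 0 0 100000000
def w1 : EuclideanSpace ℝ (Fin 3) := pv 99225076 0 12425146
def w2 : EuclideanSpace ℝ (Fin 3) := pv 65491875 (-75548141) (-1814589)
def w3 : EuclideanSpace ℝ (Fin 3) := pv (-57155421) (-50393879) (-64758898)
def w4 : EuclideanSpace ℝ (Fin 3) := pv (-65889470) (-60591506) 44578550
def w5 : EuclideanSpace ℝ (Fin 3) := pv 14348116 (-74835932) 64758898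
def w6 : EuclideanSpace ℝ (Fin 3) := pv (-14853895) (-98346586) (-10359090)
def w7 : EuclideanSpace ℝ (Fin 3) := pv 73373877 (-20556246) (-64758898)

def wvec : Fin 8 → EuclideanSpace ℝ (Fin 3) := ![w0, w1, w2, w3, w4, w5, w6, w7]

end

/-- There exist eight unit vectors in `ℝ³` whose coherence is strictly less than `0.64759`. -/
theorem exists_eight_packing :
    ∃ φ : Fin 8 → EuclideanSpace ℝ (Fin 3),
      (∀ i, ‖φ i‖ = 1) ∧
      ∀ i j : Fin 8, i < j → |(inner ℝ (φ i) (φ j) : ℝ)| < 0.64759 := by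
  refine ⟨fun i => ‖wvec i‖⁻¹ • wvec i, ?_, ?_⟩
  · intro i
    fin_cases i <;>
      · apply norm_normalize
        norm_num [wvec, w0, w1, w2, w3, w4, w5, w6, w7, pv, PiLp.inner_apply, RCLike.inner_apply, conj_trivial, WithLp.equiv_symm_apply, PiLp.toLp_apply, -inner_self_eq_norm_sq_to_K, Matrix.cons_val_two, Matrix.tail_cons, Fin.sum_univ_three, Matrix.cons_val_zero, Matrix.cons_val_one, Matrix.head_cons, Matrix.cons_val_fin_one, Matrix.cons_val', Matrix.cons_val_succ]
  · intro i j hij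
    fin_cases i <;> fin_cases j <;>
      first
        | exact absurd hij (by decide)
        | · apply abs_inner_normalize_lt <;>
              norm_num [wvec, w0, w1, w2, w3, w4, w5, w6, w7, pv, PiLp.inner_apply, RCLike.inner_apply, conj_trivial, WithLp.equiv_symm_apply, PiLp.toLp_apply, -inner_self_eq_norm_sq_to_K, Matrix.cons_val_two, Matrix.tail_cons, Fin.sum_univ_three, Matrix.cons_val_zero, Matrix.cons_val_one, Matrix.head_cons, Matrix.cons_val_fin_one, Matrix.cons_val', Matrix.cons_val_succ]
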